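/- arXiv:2409.10170 — 5 statements merged into one kernel-verified Lean document; each statement's English description precedes it below -/
import Mathlib

section
/- Every minimal model of a CNF formula F is a model of F ∧ Forced(F). That is, the models of F ∧ Forced(F) form an overapproximation of the set of minimal models of F. -/
abbrev Clause (V : Type*) := List (V × Bool)
abbrev CNF (V : Type*) := List (Clause V)

/-- An assignment satisfies a literal `(v, b)` if it assigns value `b` to `v`. -/
def litSat {V : Type*} (τ : V → Bool) (ℓ : V × Bool) : Prop := τ ℓ.1 = ℓ.2

/-- An assignment satisfies a clause if it satisfies some literal of it. -/
def clauseSat {V : Type*} (τ : V → Bool) (C : Clause V) : Prop := ∃ ℓ ∈ C, litSat τ ℓ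

/-- An assignment is a model of a CNF formula if it satisfies every clause. -/
def sat {V : Type*} (τ : V → Bool) (F : CNF V) : Prop := ∀ C ∈ F, clauseSat τ C

/-- Pointwise order on assignments, with `false < true`. -/
def leA {V : Type*} (τ₁ τ₂ : V → Bool) : Prop := ∀ x, τ₁ x ≤ τ₂ x

/-- Strictly smaller assignment. -/
def ltA {V : Type*} (τ₁ τ₂ : V → Bool) : Prop := leA τ₁ τ₂ ∧ τ₁ ≠ τ₂

/-- A minimal model: a model with no strictly smaller model. -/
def MinModel {V : Type*} (F : CNF V) (τ : V → Bool) : Prop :=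
  sat τ F ∧ ∀ τ₂, sat τ₂ F → ¬ ltA τ₂ τ

/-- Clause `C` forces variable `x` under `τ`: `x` occurs positively in `C` and all
other literals of `C` are falsified by `τ`. -/
def forces {V : Type*} (C : Clause V) (x : V) (τ : V → Bool) : Prop :=
  (x, true) ∈ C ∧ ∀ ℓ ∈ C, ℓ ≠ (x, true) → ¬ litSat τ ℓ

/-- `τ` satisfies the forced formula `Forced(F) = ⋀_x (x → ⋁_{C ∈ Forced(F,x)} ¬(C \ {x}))`:
for every variable assigned true there is a clause containing it positively whose
remaining literals are all falsified. -/
def satForced {V : Type*} (F : CNF V) (τ : V → Bool) : Prop :=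
  ∀ x, τ x = true → ∃ C ∈ F, (x, true) ∈ C ∧ ∀ ℓ ∈ C, ℓ ≠ (x, true) → ¬ litSat τ ℓ

/-- every minimal model of `F` is a model of `F ∧ Forced(F)`. -/
theorem stmt5 {V : Type*} (F : CNF V) (τ : V → Bool) (h : MinModel F τ) :
    sat τ F ∧ satForced F τ := by
  classical
  obtain ⟨hsat, hmin⟩ := h
  refine ⟨hsat, ?_⟩
  intro x hx
  by_contra hno
  push_neg at hno
  -- define τ' flipping x to false
  set τ' : V → Bool := fun y => if y = x then false else τ y with hτ'
  have hsat' : sat τ' F := by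
    intro C hC
    obtain ⟨ℓ, hℓC, hℓ⟩ := hsat C hC
    have key : ∃ ℓ' ∈ C, ℓ' ≠ (x, true) ∧ litSat τ ℓ' := by
      by_cases hxC : (x, true) ∈ C
      · obtain ⟨ℓ', hℓ'C, hne, hs⟩ := hno C hC hxC
        exact ⟨ℓ', hℓ'C, hne, not_not.mp (by simpa using hs)⟩
      · refine ⟨ℓ, hℓC, ?_, hℓ⟩
        rintro rfl; exact hxC hℓC
    obtain ⟨ℓ', hℓ'C, hne, hs⟩ := key
    refine ⟨ℓ', hℓ'C, ?_⟩
    have hne1 : ℓ'.1 ≠ x := by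
      intro h1
      rcases ℓ' with ⟨v, b⟩
      cases b
      · simp only [litSat] at hs
        simp at h1; subst h1
        rw [hx] at hs; exact Bool.noConfusion hs
      · simp at h1; subst h1; exact hne rfl
    simp only [litSat, hτ', if_neg hne1]
    exact hs
  have hlt : ltA τ' τ := by
    constructor
    · intro y
      by_cases hy : y = x
      · simp [hτ', hy]
      · simp [hτ', hy]
    · intro heq
      have := congrFun heq x
      simp [hτ', hx] at this
  exact hmin τ' hsat' hlt
end

section
/- For an acyclic CNF formula F, the number of minimal models of F equals the number of models of F ∧ Forced(F); equivalently, a model τ of F is minimal if and only if τ satisfies Forced(F). -/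
/-- Arc of the dependency graph: from `a` to `b` when some clause contains `¬a` and `b`. -/
def dep {V : Type*} (F : CNF V) (a b : V) : Prop :=
  ∃ C ∈ F, (a, false) ∈ C ∧ (b, true) ∈ C

/-- A CNF formula is acyclic if its dependency graph has no directed cycle. -/
def Acyclic {V : Type*} (F : CNF V) : Prop :=
  ∀ a, ¬ Relation.TransGen (dep F) a a

theorem forced_of_min {V : Type*} (F : CNF V) (τ : V → Bool) (h : MinModel F τ) :
    satForced F τ := by
  classical
  intro x hx
  by_contra hno
  push_neg at hno
  set τ' := fun y => if y = x then false else τ y with hτ'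
  have hne : τ' ≠ τ := by
    intro h'
    have := congrFun h' x
    simp [τ', hx] at this
  have hle : leA τ' τ := by
    intro y
    by_cases hy : y = x <;> simp [τ', hy]
  have hsat : sat τ' F := by
    intro C hC
    obtain ⟨ℓ, hℓ, hsℓ⟩ := h.1 C hC
    by_cases hℓx : ℓ.1 = x
    · have hℓeq : ℓ = (x, true) := by
        have : τ ℓ.1 = ℓ.2 := hsℓ
        rw [hℓx, hx] at this
        exact Prod.ext hℓx this.symm
      subst hℓeq
      obtain ⟨ℓ', hℓ'C, hℓ'ne, hℓ's⟩ := hno C hC hℓ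
      by_cases h'x : ℓ'.1 = x
      · exfalso
        have : τ ℓ'.1 = ℓ'.2 := hℓ's
        rw [h'x, hx] at this
        exact hℓ'ne (Prod.ext h'x this.symm)
      · exact ⟨ℓ', hℓ'C, by simpa [litSat, τ', h'x] using hℓ's⟩
    · exact ⟨ℓ, hℓ, by simpa [litSat, τ', hℓx] using hsℓ⟩
  exact h.2 τ' hsat ⟨hle, hne⟩

private lemma chain_aux {V : Type*} {F : CNF V} {S : Type*} (f : S → V)
    (g : S → S) (hg : ∀ s, dep F (f (g s)) (f s)) :
    ∀ (d : ℕ) (s : S), Relation.TransGen (dep F) (f (g^[d+1] s)) (f s) := by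
  intro d
  induction d with
  | zero => intro s; exact Relation.TransGen.single (hg s)
  | succ d ih =>
    intro s
    have h1 : Relation.TransGen (dep F) (f (g^[d+1] (g s))) (f (g s)) := ih (g s)
    have h2 : Relation.TransGen (dep F) (f (g s)) (f s) := Relation.TransGen.single (hg s)
    have : g^[d+2] s = g^[d+1] (g s) := Function.iterate_succ_apply g (d+1) s
    rw [this]
    exact h1.trans h2

theorem min_of_forced {V : Type*} [Fintype V] (F : CNF V) (hA : Acyclic F)
    (τ : V → Bool) (h1 : sat τ F) (h2 : satForced F τ) : MinModel F τ := by
  refine ⟨h1, ?_⟩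
  rintro τ₂ hs ⟨hle, hne⟩
  have hSne : ∃ x, τ x = true ∧ τ₂ x = false := by
    by_contra h
    push_neg at h
    apply hne
    funext x
    have hx := hle x
    cases h2x : τ₂ x <;> cases hx' : τ x
    · rfl
    · exact absurd h2x (h x hx')
    · rw [h2x, hx'] at hx; exact absurd hx (by simp)
    · rfl
  set S := {x : V // τ x = true ∧ τ₂ x = false} with hS
  have key : ∀ s : S, ∃ t : S, dep F t.1 s.1 := by
    rintro ⟨x, hx1, hx2⟩
    obtain ⟨C, hC, hxC, hforce⟩ := h2 x hx1
    obtain ⟨ℓ, hℓC, hℓs⟩ := hs C hC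
    have hℓne : ℓ ≠ (x, true) := by
      rintro rfl
      have : τ₂ x = true := hℓs
      rw [hx2] at this
      exact absurd this (by simp)
    have hℓτ : ¬ litSat τ ℓ := hforce ℓ hℓC hℓne
    have hfacts : τ ℓ.1 = true ∧ τ₂ ℓ.1 = false ∧ ℓ.2 = false := by
      have hl : τ₂ ℓ.1 = true → τ ℓ.1 = true := by
        intro h
        have := hle ℓ.1
        rw [h] at this
        cases ht : τ ℓ.1
        · rw [ht] at this; exact absurd this (by decide)
        · rfl
      have hℓs' : τ₂ ℓ.1 = ℓ.2 := hℓs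
      have hℓτ' : τ ℓ.1 ≠ ℓ.2 := hℓτ
      cases hb : ℓ.2 <;> cases ht : τ ℓ.1 <;> simp_all
    refine ⟨⟨ℓ.1, hfacts.1, hfacts.2.1⟩, C, hC, ?_, hxC⟩
    have : ℓ = (ℓ.1, false) := Prod.ext rfl hfacts.2.2
    rwa [this] at hℓC
  choose g hg using key
  obtain ⟨x₀, hx₀⟩ := hSne
  have hfin : Finite S := Subtype.finite
  obtain ⟨m, n, hmn, heq⟩ :=
    Finite.exists_ne_map_eq_of_infinite (fun k : ℕ => g^[k] ⟨x₀, hx₀⟩)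
  have cyc : ∀ m n : ℕ, m < n → g^[m] ⟨x₀, hx₀⟩ = g^[n] ⟨x₀, hx₀⟩ → False := by
    intro m n hlt heq
    have h1 : Relation.TransGen (dep F)
        ((g^[n] ⟨x₀, hx₀⟩ : S).1) ((g^[m] ⟨x₀, hx₀⟩ : S).1) := by
      have hn : n = (n - m - 1 + 1) + m := by omega
      rw [hn, Function.iterate_add_apply]
      exact chain_aux (fun s : S => s.1) g hg (n - m - 1) (g^[m] ⟨x₀, hx₀⟩)
    rw [← heq] at h1
    exact hA _ h1
  rcases lt_or_gt_of_ne hmn with h | h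
  · exact cyc m n h heq
  · exact cyc n m h heq.symm

/-- for acyclic `F`, the number of minimal models equals the number of
models of `F ∧ Forced(F)`; equivalently a model is minimal iff it satisfies
`Forced(F)`. -/
theorem stmt6 {V : Type*} [Fintype V] (F : CNF V) (hA : Acyclic F) :
    Nat.card {τ : V → Bool // MinModel F τ} =
      Nat.card {τ : V → Bool // sat τ F ∧ satForced F τ} ∧
    ∀ τ : V → Bool, sat τ F → (MinModel F τ ↔ satForced F τ) := by
  have hiff : ∀ τ : V → Bool, MinModel F τ ↔ sat τ F ∧ satForced F τ := by
    intro τ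
    constructor
    · intro h; exact ⟨h.1, forced_of_min F τ h⟩
    · rintro ⟨hs, hf⟩; exact min_of_forced F hA τ hs hf
  constructor
  · exact Nat.card_congr (Equiv.subtypeEquivRight hiff)
  · intro τ hs
    constructor
    · intro h; exact forced_of_min F τ h
    · intro h; exact min_of_forced F hA τ hs h
end

section
/- Let F be an acyclic CNF formula and τ a model of F that is not minimal. Then there exists an infinite sequence of distinct variables x₁, x₂, … all assigned true by τ such that each xᵢ is not justified under τ — contradicting the finiteness of var(F). Hence for acyclic F, every model of F satisfying Forced(F) is a minimal model of F. -/
/-- `x` is justified under `τ`: flipping `x` from true to false falsifies `F`. -/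
def justified {V : Type*} [DecidableEq V] (F : CNF V) (τ : V → Bool) (x : V) : Prop :=
  ¬ sat (Function.update τ x false) F

/-- for acyclic `F`, a model of `F ∧ Forced(F)` that is not minimal
yields an infinite sequence of distinct variables assigned true, none of them
justified — contradicting finiteness of the variable set; hence for acyclic `F`
every model of `F` satisfying `Forced(F)` is minimal. -/
theorem stmt7 {V : Type*} [DecidableEq V] (F : CNF V) (hA : Acyclic F) :
    (∀ τ : V → Bool, sat τ F → satForced F τ → ¬ MinModel F τ →
      ∃ f : ℕ → V, Function.Injective f ∧
        ∀ i, τ (f i) = true ∧ ¬ justified F τ (f i)) ∧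
    (Finite V → ∀ τ : V → Bool, sat τ F → satForced F τ → MinModel F τ) := by

  have main : ∀ τ : V → Bool, sat τ F → satForced F τ → MinModel F τ := by
    intro τ hsat hforced
    refine ⟨hsat, ?_⟩
    rintro τ₂ hsat₂ ⟨hle, hne⟩
    -- there is a variable where they differ
    have hx0 : ∃ x, τ x = true ∧ τ₂ x = false := by
      by_contra h
      push_neg at h
      apply hne
      funext x
      have h1 := hle x
      rcases hτ : τ x with _ | _ <;> rcases hτ2 : τ₂ x with _ | _
      · rfl
      · rw [hτ, hτ2] at h1; exact absurd h1 (by decide)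
      · exact absurd hτ2 (h x hτ)
      · rfl
    have step : ∀ x, τ x = true → τ₂ x = false →
        ∃ y, (τ y = true ∧ τ₂ y = false) ∧ dep F y x := by
      intro x hx hx2
      obtain ⟨C, hCF, hxC, hall⟩ := hforced x hx
      obtain ⟨ℓ, hℓC, hℓsat⟩ := hsat₂ C hCF
      have hℓne : ℓ ≠ (x, true) := by
        rintro rfl
        simp [litSat, hx2] at hℓsat
      have hτℓ : ¬ litSat τ ℓ := hall ℓ hℓC hℓne
      obtain ⟨y, b⟩ := ℓ
      have hb : b = false := by
        cases b
        · rfl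
        · exfalso
          apply hτℓ
          have h1 : τ₂ y = true := hℓsat
          have h2 := hle y
          rw [h1] at h2
          have h3 : τ y = true := by revert h2; cases τ y <;> simp
          simp [litSat, h3]
      subst hb
      have hτ2y : τ₂ y = false := hℓsat
      have hτy : τ y = true := by simpa [litSat] using hτℓ
      exact ⟨y, ⟨hτy, hτ2y⟩, C, hCF, hℓC, hxC⟩
    obtain ⟨x0, hx0⟩ := hx0
    have step' : ∀ p : {x // τ x = true ∧ τ₂ x = false},
        ∃ q : {x // τ x = true ∧ τ₂ x = false}, dep F q.1 p.1 := by
      intro p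
      obtain ⟨y, hy, hd⟩ := step p.1 p.2.1 p.2.2
      exact ⟨⟨y, hy⟩, hd⟩
    let f : ℕ → {x // τ x = true ∧ τ₂ x = false} :=
      fun n => Nat.rec (motive := fun _ => {x // τ x = true ∧ τ₂ x = false}) ⟨x0, hx0⟩ (fun _ p => (step' p).choose) n
    have hf : ∀ n, dep F (f (n+1)).1 (f n).1 := fun n => (step' (f n)).choose_spec
    have hchain : ∀ n m, m < n → Relation.TransGen (dep F) (f n).1 (f m).1 := by
      intro n
      induction n with
      | zero => omega
      | succ n ih =>
        intro m hm
        rcases Nat.lt_succ_iff_lt_or_eq.mp hm with h | h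
        · exact Relation.TransGen.head (hf n) (ih m h)
        · rw [h]; exact Relation.TransGen.single (hf n)
    have hinj : Function.Injective (fun n => (f n).1) := by
      intro a b hab
      by_contra hne'
      have hab' : (f a).1 = (f b).1 := hab
      rcases Nat.lt_or_ge a b with h | h
      · exact hA (f a).1 (hab' ▸ hchain b a h)
      · have h' : b < a := lt_of_le_of_ne h (Ne.symm hne')
        exact hA (f b).1 (hab'.symm ▸ hchain a b h')
    have hmem : ∀ n, (f n).1 ∈ (F.flatMap (fun C => C.map Prod.fst)).toFinset := by
      intro n
      obtain ⟨C, hCF, _, hx⟩ := hf n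
      rw [List.mem_toFinset, List.mem_flatMap]
      exact ⟨C, hCF, List.mem_map.mpr ⟨((f n).1, true), hx, rfl⟩⟩
    have hinf : (↑(F.flatMap (fun C => C.map Prod.fst)).toFinset : Set V).Infinite :=
      Set.infinite_of_injective_forall_mem hinj hmem
    exact hinf (Finset.finite_toSet _)
  constructor
  · intro τ hs hf hnm
    exact absurd (main τ hs hf) hnm
  · intro _ τ hs hf
    exact main τ hs hf
end

section
/- Let F be a Boolean formula and x a variable. If τ is a minimal model of F with τ(x) = false, then the restriction of τ to var(F) \ {x} is a minimal model of the formula F|_{¬x} obtained by conditioning F on x = false; conversely, extending any minimal model of F|_{¬x} by setting x = false yields a minimal model of F, provided x does not appear only positively in any clause forcing it. -/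
/-- `F` conditioned on `x = false`: clauses containing `¬x` are removed (satisfied)
and the literal `x` is deleted from the remaining clauses. -/
def condNeg {V : Type*} [DecidableEq V] (F : CNF V) (x : V) : CNF {y : V // y ≠ x} :=
  (F.filter (fun C => decide ((x, false) ∉ C))).map
    (fun C => C.filterMap
      (fun ℓ => if h : ℓ.1 = x then none else some ((⟨ℓ.1, h⟩ : {y : V // y ≠ x}), ℓ.2)))
lemma sat_restrict {V : Type*} [DecidableEq V] {F : CNF V} {x : V} {τ : V → Bool}
    (hs : sat τ F) (hx : τ x = false) : sat (fun y => τ y.1) (condNeg F x) := by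
  intro C' hC'
  simp only [condNeg, List.mem_map, List.mem_filter] at hC'
  obtain ⟨C, ⟨hCF, hCx⟩, rfl⟩ := hC'
  obtain ⟨ℓ, hℓC, hℓ⟩ := hs C hCF
  have hne : ℓ.1 ≠ x := by
    intro h
    obtain ⟨a, b⟩ := ℓ
    simp only at h
    subst h
    cases b
    · rw [decide_eq_true_iff] at hCx; exact hCx hℓC
    · rw [litSat] at hℓ; simp [hx] at hℓ
  refine ⟨(⟨ℓ.1, hne⟩, ℓ.2), ?_, hℓ⟩
  rw [List.mem_filterMap]
  exact ⟨ℓ, hℓC, by simp [hne]⟩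

lemma sat_ext {V : Type*} [DecidableEq V] {F : CNF V} {x : V} {σ : {y : V // y ≠ x} → Bool}
    (hs : sat σ (condNeg F x)) :
    sat (fun y => if h : y = x then false else σ ⟨y, h⟩) F := by
  intro C hCF
  by_cases hCx : (x, false) ∈ C
  · exact ⟨(x, false), hCx, by simp [litSat]⟩
  · have hmem : C.filterMap
        (fun ℓ => if h : ℓ.1 = x then none else some ((⟨ℓ.1, h⟩ : {y : V // y ≠ x}), ℓ.2))
        ∈ condNeg F x := by
      simp only [condNeg, List.mem_map, List.mem_filter]
      exact ⟨C, ⟨hCF, by simpa using hCx⟩, rfl⟩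
    obtain ⟨ℓ', hℓ'mem, hℓ'⟩ := hs _ hmem
    rw [List.mem_filterMap] at hℓ'mem
    obtain ⟨ℓ, hℓC, hf⟩ := hℓ'mem
    by_cases h : ℓ.1 = x
    · simp [h] at hf
    · simp only [h, dif_neg, not_false_iff] at hf
      refine ⟨ℓ, hℓC, ?_⟩
      simp only [litSat, dif_neg h]
      injection hf with hf
      subst hf
      exact hℓ'

/-- if `τ` is a minimal model of `F` with `τ x = false` then its
restriction is a minimal model of `F|_{¬x}`; conversely, extending a minimal model
of `F|_{¬x}` by `x = false` yields a minimal model of `F`. -/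
theorem stmt11 {V : Type*} [DecidableEq V] (F : CNF V) (x : V) :
    (∀ τ : V → Bool, MinModel F τ → τ x = false →
      MinModel (condNeg F x) (fun y => τ y.1)) ∧
    (∀ σ : {y : V // y ≠ x} → Bool, MinModel (condNeg F x) σ →
      MinModel F (fun y => if h : y = x then false else σ ⟨y, h⟩)) := by
  constructor
  · intro τ hτ hx
    refine ⟨sat_restrict hτ.1 hx, ?_⟩
    rintro σ₂ hσ₂ ⟨hle, hne⟩
    refine hτ.2 (fun y => if h : y = x then false else σ₂ ⟨y, h⟩) (sat_ext hσ₂) ⟨?_, ?_⟩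
    · intro y
      by_cases h : y = x
      · subst h; simp
      · simpa only [dif_neg h] using hle ⟨y, h⟩
    · intro heq
      apply hne
      funext y
      have := congrFun heq y.1
      simpa [y.2] using this
  · intro σ hσ
    refine ⟨sat_ext hσ.1, ?_⟩
    rintro τ₂ hτ₂ ⟨hle, hne⟩
    have hx2 : τ₂ x = false := by
      have h := hle x
      simp only [dite_eq_ite, if_pos rfl] at h
      have h' : τ₂ x ≤ false := by simpa using h
      revert h'
      cases τ₂ x <;> simp
    refine hσ.2 (fun y => τ₂ y.1) (sat_restrict hτ₂ hx2) ⟨?_, ?_⟩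
    · intro y
      have := hle y.1
      simpa [y.2] using this
    · intro heq
      apply hne
      funext y
      by_cases h : y = x
      · subst h; simp [hx2]
      · have := congrFun heq ⟨y, h⟩
        simpa [h] using this
end

section
/- Let F be a CNF formula, τ a model of F, and Copy(F)|_τ the copy formula conditioned on τ (with copy variable cₓ set to false whenever τ(x) = false via the implications cₓ → x). If the formula Copy(F)|_τ ∧ ⋁_{cₓ remaining} ¬cₓ is satisfiable by some assignment σ to the copy variables, then the assignment τ' defined by τ'(x) = σ(cₓ) for remaining copy variables and τ'(x) = τ(x) otherwise is a model of F strictly smaller than τ; hence τ is not a minimal model of F. -/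
/-- `x` occurs as a positive literal in some clause of `F`. -/
def hasPos {V : Type*} (F : CNF V) (x : V) : Prop := ∃ C ∈ F, (x, true) ∈ C

/-- Satisfaction of the copy formula `Copy(F)` conditioned on the assignment `τ`
to the original variables, where `σ x` is the value of the copy variable `c_x`:
(1) `c_x → x`; (2) for each clause with at least one positive literal,
`c_{b₁} ∧ … ∧ c_{b_ℓ} → c_{a₁} ∨ … ∨ c_{a_k}`; (3) `x → false` for every `x`
with no positive occurrence. -/
def CopySat {V : Type*} (F : CNF V) (τ σ : V → Bool) : Prop :=
  (∀ x, σ x = true → τ x = true) ∧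
  (∀ C ∈ F, (∃ ℓ ∈ C, ℓ.2 = true) →
      (∀ b, (b, false) ∈ C → σ b = true) → ∃ a, (a, true) ∈ C ∧ σ a = true) ∧
  (∀ x, ¬ hasPos F x → τ x = false)

/-- if `Copy(F)|_τ ∧ ⋁ ¬c_x` (over the remaining copy variables) is
satisfied by `σ`, then the assignment `τ'` agreeing with `σ` on variables true in
`τ` and with `τ` elsewhere is a model of `F` strictly smaller than `τ`; hence `τ`
is not a minimal model. -/
theorem stmt14 {V : Type*} (F : CNF V) (τ : V → Bool) (hτ : sat τ F)
    (σ : V → Bool) (hσ : CopySat F τ σ) (hx : ∃ x, τ x = true ∧ σ x = false) :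
    (sat (fun x => if τ x = true then σ x else τ x) F ∧
      ltA (fun x => if τ x = true then σ x else τ x) τ) ∧
    ¬ MinModel F τ := by

  obtain ⟨h1, h2, h3⟩ := hσ
  obtain ⟨x0, hx0t, hx0s⟩ := hx
  set τ' : _ → Bool := (fun x => if τ x = true then σ x else τ x) with hτ'
  have hsat : sat τ' F := by
    intro C hC
    by_cases hpos : ∃ ℓ ∈ C, ℓ.2 = true
    · by_cases hall : ∀ b, (b, false) ∈ C → σ b = true
      · obtain ⟨a, haC, has⟩ := h2 C hC hpos hall
        refine ⟨(a, true), haC, ?_⟩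
        have := h1 a has
        simp [litSat, hτ', this, has]
      · push_neg at hall
        obtain ⟨b, hbC, hbs⟩ := hall
        refine ⟨(b, false), hbC, ?_⟩
        simp only [Bool.not_eq_true] at hbs
        by_cases htb : τ b = true
        · simp [litSat, hτ', htb, hbs]
        · simp only [Bool.not_eq_true] at htb
          simp [litSat, hτ', htb]
    · obtain ⟨ℓ, hℓC, hℓ⟩ := hτ C hC
      refine ⟨ℓ, hℓC, ?_⟩
      have hℓ2 : ℓ.2 = false := by
        cases hb : ℓ.2
        · rfl
        · exact absurd ⟨ℓ, hℓC, hb⟩ hpos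
      have : τ ℓ.1 = false := by rw [litSat] at hℓ; rw [hℓ, hℓ2]
      simp [litSat, hτ', this, hℓ2]
  have hlt : ltA τ' τ := by
    constructor
    · intro x
      by_cases htx : τ x = true
      · by_cases hsx : σ x = true <;> simp [hτ', htx, hsx]
      · simp only [Bool.not_eq_true] at htx; simp [hτ', htx]
    · intro heq
      have := congrFun heq x0
      simp [hτ', hx0t, hx0s] at this
  exact ⟨⟨hsat, hlt⟩, fun hmin => hmin.2 τ' hsat hlt⟩
end
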